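/- Theorem (extensionality for values): let v and w be values, E a term and x a λ-variable. If v ≡ w, then E[x:=v] ≡ E[x:=w]. -/

import Mathlib

namespace CBV

/-! ## Syntax: values, terms, stacks, processes of the call-by-value λμ-calculus.
    λ-variables, μ-variables, term variables, labels and constructors are all
    represented by natural numbers. -/

mutual
  /-- Values: `x`, `λx.t`, `C[v]`, `{lᵢ = vᵢ}`. -/
  inductive Val : Type where
    | var : ℕ → Val                      -- λ-variable x
    | lam : ℕ → Trm → Val                -- λx.t
    | cns : ℕ → Val → Val                -- C[v]
    | rcd : Flds → Val                   -- {lᵢ = vᵢ}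
  /-- Record fields: a finite list of (label, value) pairs. -/
  inductive Flds : Type where
    | nil : Flds
    | cons : ℕ → Val → Flds → Flds
  /-- Terms: `a`, `v`, `t u`, `μα.t`, `p`, `v.l`, `case_v [Cᵢ[xᵢ] → tᵢ]`, `δ_{v,w}`. -/
  inductive Trm : Type where
    | tvar : ℕ → Trm                     -- term variable a
    | val : Val → Trm
    | app : Trm → Trm → Trm
    | mu : ℕ → Trm → Trm                 -- μα.t
    | prc : Proc → Trm
    | prj : Val → ℕ → Trm                -- v.l
    | cse : Val → Brs → Trm              -- case_v [...]
    | dlt : Val → Val → Trm              -- δ_{v,w}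
  /-- Case branches: a finite list of (constructor, bound λ-variable, body). -/
  inductive Brs : Type where
    | nil : Brs
    | cons : ℕ → ℕ → Trm → Brs → Brs
  /-- Stacks: `α`, `v.π`, `[t]π`. -/
  inductive Stk : Type where
    | svar : ℕ → Stk                     -- stack (μ-)variable α
    | push : Val → Stk → Stk             -- v.π
    | frame : Trm → Stk → Stk            -- [t]π
  /-- Processes: `t ∗ π`. -/
  inductive Proc : Type where
    | mk : Trm → Stk → Proc
end

/-- Lookup of a label in a record. -/
def Flds.lookup : Flds → ℕ → Option Val
  | .nil, _ => none
  | .cons l v fs, k => if l = k then some v else fs.lookup k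

/-- Lookup of a constructor among case branches, returning the bound variable and body. -/
def Brs.lookup : Brs → ℕ → Option (ℕ × Trm)
  | .nil, _ => none
  | .cons c x t bs, k => if c = k then some (x, t) else bs.lookup k

/-- A substitution maps λ-variables to values, μ-variables to stacks and
    term variables to terms (totally; the identity outside its support). -/
structure Subst : Type where
  lamS : ℕ → Val
  muS  : ℕ → Stk
  trmS : ℕ → Trm

/-- The identity substitution. -/
def Subst.id : Subst := ⟨Val.var, Stk.svar, Trm.tvar⟩

/-- The substitution [x := v] of a single λ-variable. -/
def subst1Lam (x : ℕ) (v : Val) : Subst :=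
  { Subst.id with lamS := Function.update Val.var x v }

/-- The substitution [α := π] of a single μ-variable. -/
def subst1Mu (α : ℕ) (π : Stk) : Subst :=
  { Subst.id with muS := Function.update Stk.svar α π }

/-- The substitution [a := t] of a single term variable. -/
def subst1Trm (a : ℕ) (t : Trm) : Subst :=
  { Subst.id with trmS := Function.update Trm.tvar a t }

/-- Remove a λ-variable from the support of a substitution (used under binders). -/
def Subst.skipLam (σ : Subst) (x : ℕ) : Subst :=
  { σ with lamS := Function.update σ.lamS x (Val.var x) }

/-- Remove a μ-variable from the support of a substitution (used under binders). -/
def Subst.skipMu (σ : Subst) (α : ℕ) : Subst :=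
  { σ with muS := Function.update σ.muS α (Stk.svar α) }

mutual
  /-- Application of a substitution to a value. -/
  def substVal (σ : Subst) : Val → Val
    | .var x => σ.lamS x
    | .lam x t => .lam x (substTrm (σ.skipLam x) t)
    | .cns c v => .cns c (substVal σ v)
    | .rcd fs => .rcd (substFlds σ fs)
  /-- Application of a substitution to record fields. -/
  def substFlds (σ : Subst) : Flds → Flds
    | .nil => .nil
    | .cons l v fs => .cons l (substVal σ v) (substFlds σ fs)
  /-- Application of a substitution to a term. -/
  def substTrm (σ : Subst) : Trm → Trm
    | .tvar a => σ.trmS a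
    | .val v => .val (substVal σ v)
    | .app t u => .app (substTrm σ t) (substTrm σ u)
    | .mu α t => .mu α (substTrm (σ.skipMu α) t)
    | .prc p => .prc (substPrc σ p)
    | .prj v l => .prj (substVal σ v) l
    | .cse v bs => .cse (substVal σ v) (substBrs σ bs)
    | .dlt v w => .dlt (substVal σ v) (substVal σ w)
  /-- Application of a substitution to case branches. -/
  def substBrs (σ : Subst) : Brs → Brs
    | .nil => .nil
    | .cons c x t bs => .cons c x (substTrm (σ.skipLam x) t) (substBrs σ bs)
  /-- Application of a substitution to a stack. -/
  def substStk (σ : Subst) : Stk → Stk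
    | .svar α => σ.muS α
    | .push v π => .push (substVal σ v) (substStk σ π)
    | .frame t π => .frame (substTrm σ t) (substStk σ π)
  /-- Application of a substitution to a process. -/
  def substPrc (σ : Subst) : Proc → Proc
    | .mk t π => .mk (substTrm σ t) (substStk σ π)
end

/-! ## The reduction relation (≻). -/

/-- The reduction relation (≻) of the Krivine abstract machine. -/
inductive Red : Proc → Proc → Prop where
  | app (t u : Trm) (π : Stk) :
      Red (.mk (.app t u) π) (.mk u (.frame t π))
  | frame (v : Val) (t : Trm) (π : Stk) :
      Red (.mk (.val v) (.frame t π)) (.mk t (.push v π))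
  | beta (x : ℕ) (t : Trm) (v : Val) (π : Stk) :
      Red (.mk (.val (.lam x t)) (.push v π)) (.mk (substTrm (subst1Lam x v) t) π)
  | mu (α : ℕ) (t : Trm) (π : Stk) :
      Red (.mk (.mu α t) π) (.mk (substTrm (subst1Mu α π) t) π)
  | prc (p : Proc) (π : Stk) :
      Red (.mk (.prc p) π) p
  | prj (fs : Flds) (l : ℕ) (v : Val) (π : Stk) :
      fs.lookup l = some v →
      Red (.mk (.prj (.rcd fs) l) π) (.mk (.val v) π)
  | cse (c : ℕ) (v : Val) (bs : Brs) (x : ℕ) (t : Trm) (π : Stk) :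
      bs.lookup c = some (x, t) →
      Red (.mk (.cse (.cns c v) bs) π) (.mk (substTrm (subst1Lam x v) t) π)

/-- k-fold application of a relation. -/
def iterRel (R : Proc → Proc → Prop) : ℕ → Proc → Proc → Prop
  | 0 => Eq
  | k + 1 => fun p r => ∃ q, R p q ∧ iterRel R k q r

/-- A process is final if it is of the form `v ∗ α`. -/
def Final (p : Proc) : Prop :=
  ∃ (v : Val) (α : ℕ), p = .mk (.val v) (.svar α)

/-- A process is δ-like if it is of the form `δ_{v,w} ∗ π`. -/
def DeltaLike (p : Proc) : Prop :=
  ∃ (v w : Val) (π : Stk), p = .mk (.dlt v w) π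

/-- A process is blocked if it has no (≻)-reduct. -/
def Blocked (p : Proc) : Prop := ¬ ∃ q, Red p q

/-- A process is stuck if it is neither final nor δ-like, and all its
    substitution instances are blocked. -/
def Stuck (p : Proc) : Prop :=
  ¬ Final p ∧ ¬ DeltaLike p ∧ ∀ σ : Subst, Blocked (substPrc σ p)

/-- A process is non-terminating if it reaches no blocked process. -/
def NonTerminating (p : Proc) : Prop :=
  ¬ ∃ q, Relation.ReflTransGen Red p q ∧ Blocked q

/-- `p ⇓_R`: the process `p` converges for the reduction relation `R`,
    i.e. it `R`-reduces to a final process. -/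
def ConvergesIn (R : Proc → Proc → Prop) (p : Proc) : Prop :=
  ∃ q, Relation.ReflTransGen R p q ∧ Final q

/-- The indexed reduction relation (↪ᵢ) = (≻) ∪ {(δ_{v,w} ∗ π, v ∗ π) | ∃ j < i, v ≢ⱼ w}.
    (The condition `v ≢ⱼ w` is inlined; it coincides with `¬ EquivI j v w` below.) -/
def RedI : ℕ → Proc → Proc → Prop
  | i => fun p q =>
      Red p q ∨
      ∃ (v w : Val) (π : Stk), p = .mk (.dlt v w) π ∧ q = .mk (.val v) π ∧
        ∃ j, ∃ _ : j < i,
          ¬ (∀ k, ∀ _ : k ≤ j, ∀ (π' : Stk) (σ : Subst),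
              ConvergesIn (RedI k) (.mk (substTrm σ (.val v)) π') ↔
              ConvergesIn (RedI k) (.mk (substTrm σ (.val w)) π'))
  termination_by i => i
  decreasing_by omega

/-- The indexed observational equivalence (≡ᵢ). -/
def EquivI (i : ℕ) (t u : Trm) : Prop :=
  ∀ j, j ≤ i → ∀ (π : Stk) (σ : Subst),
    ConvergesIn (RedI j) (.mk (substTrm σ t) π) ↔
    ConvergesIn (RedI j) (.mk (substTrm σ u) π)

/-- The reduction relation (↪) = ∪ᵢ (↪ᵢ). -/
def RedFull (p q : Proc) : Prop := ∃ i, RedI i p q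

/-- Observational equivalence (≡) = ∩ᵢ (≡ᵢ). -/
def Equiv (t u : Trm) : Prop := ∀ i, EquivI i t u

/-! ## The pole and orthogonality. -/

/-- The pole ⫫ = {p | p ⇓_↪}. -/
def Pole : Set Proc := {p | ConvergesIn RedFull p}

/-- Orthogonal of a set of values: φ^⊥ = {π | ∀ v ∈ φ, v ∗ π ∈ ⫫}. -/
def orth (φ : Set Val) : Set Stk :=
  {π | ∀ v ∈ φ, Proc.mk (.val v) π ∈ Pole}

/-- Bi-orthogonal of a set of values: φ^⊥⊥ = {t | ∀ π ∈ φ^⊥, t ∗ π ∈ ⫫}. -/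
def biorth (φ : Set Val) : Set Trm :=
  {t | ∀ π ∈ orth φ, Proc.mk t π ∈ Pole}

/-! ## Free variables and closedness. -/

/-- The kinds of variables: λ-variables, μ-variables, term variables,
    predicate variables. -/
inductive VKind : Type where
  | lam | mu | trm | prd
deriving DecidableEq

mutual
  /-- Free variables (of every kind) of a value. -/
  def fvVal : Val → Set (VKind × ℕ)
    | .var x => {(VKind.lam, x)}
    | .lam x t => fvTrm t \ {(VKind.lam, x)}
    | .cns _ v => fvVal v
    | .rcd fs => fvFlds fs
  /-- Free variables of record fields. -/
  def fvFlds : Flds → Set (VKind × ℕ)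
    | .nil => ∅
    | .cons _ v fs => fvVal v ∪ fvFlds fs
  /-- Free variables of a term. -/
  def fvTrm : Trm → Set (VKind × ℕ)
    | .tvar a => {(VKind.trm, a)}
    | .val v => fvVal v
    | .app t u => fvTrm t ∪ fvTrm u
    | .mu α t => fvTrm t \ {(VKind.mu, α)}
    | .prc p => fvPrc p
    | .prj v _ => fvVal v
    | .cse v bs => fvVal v ∪ fvBrs bs
    | .dlt v w => fvVal v ∪ fvVal w
  /-- Free variables of case branches. -/
  def fvBrs : Brs → Set (VKind × ℕ)
    | .nil => ∅
    | .cons _ x t bs => (fvTrm t \ {(VKind.lam, x)}) ∪ fvBrs bs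
  /-- Free variables of a stack. -/
  def fvStk : Stk → Set (VKind × ℕ)
    | .svar α => {(VKind.mu, α)}
    | .push v π => fvVal v ∪ fvStk π
    | .frame t π => fvTrm t ∪ fvStk π
  /-- Free variables of a process. -/
  def fvPrc : Proc → Set (VKind × ℕ)
    | .mk t π => fvTrm t ∪ fvStk π
end

/-- A term is closed if it contains no free variable of any kind. -/
def ClosedTrm (t : Trm) : Prop := fvTrm t = ∅

end CBV
namespace CBV

/-! ### Basic substitution lemmas -/

theorem Subst.ext' {σ τ : Subst} (h1 : σ.lamS = τ.lamS) (h2 : σ.muS = τ.muS)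
    (h3 : σ.trmS = τ.trmS) : σ = τ := by
  cases σ; cases τ; simp_all

theorem skipLam_lamS (σ : Subst) (y z : ℕ) :
    (σ.skipLam y).lamS z = if z = y then Val.var y else σ.lamS z := by
  by_cases h : z = y <;> simp [Subst.skipLam, Function.update, h]

theorem skipMu_muS (σ : Subst) (y z : ℕ) :
    (σ.skipMu y).muS z = if z = y then Stk.svar y else σ.muS z := by
  by_cases h : z = y <;> simp [Subst.skipMu, Function.update, h]

theorem skipLam_muS (σ : Subst) (y : ℕ) : (σ.skipLam y).muS = σ.muS := rfl
theorem skipLam_trmS (σ : Subst) (y : ℕ) : (σ.skipLam y).trmS = σ.trmS := rfl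
theorem skipMu_lamS (σ : Subst) (y : ℕ) : (σ.skipMu y).lamS = σ.lamS := rfl
theorem skipMu_trmS (σ : Subst) (y : ℕ) : (σ.skipMu y).trmS = σ.trmS := rfl

theorem subst1Lam_lamS (x : ℕ) (A : Val) (z : ℕ) :
    (subst1Lam x A).lamS z = if z = x then A else Val.var z := by
  by_cases h : z = x <;> simp [subst1Lam, Subst.id, Function.update, h]

theorem subst1Lam_muS (x : ℕ) (A : Val) : (subst1Lam x A).muS = Stk.svar := rfl
theorem subst1Lam_trmS (x : ℕ) (A : Val) : (subst1Lam x A).trmS = Trm.tvar := rfl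

theorem skipLam_subst1 {y Z : ℕ} (u : Val) (h : y ≠ Z) :
    (subst1Lam Z u).skipLam y = subst1Lam Z u := by
  refine Subst.ext' ?_ rfl rfl
  funext z
  rw [skipLam_lamS]
  split
  · next hz => subst hz; rw [subst1Lam_lamS, if_neg h]
  · rfl

theorem skipMu_subst1 (Z α : ℕ) (u : Val) : (subst1Lam Z u).skipMu α = subst1Lam Z u := by
  refine Subst.ext' rfl ?_ rfl
  funext z
  rw [skipMu_muS]
  split
  · next hz => subst hz; rfl
  · rfl

theorem skipLam_id (y : ℕ) : Subst.id.skipLam y = Subst.id := by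
  refine Subst.ext' ?_ rfl rfl
  funext z; rw [skipLam_lamS]; split <;> simp_all [Subst.id]

theorem skipMu_id (α : ℕ) : Subst.id.skipMu α = Subst.id := by
  refine Subst.ext' rfl ?_ rfl
  funext z; rw [skipMu_muS]; split <;> simp_all [Subst.id]

theorem skipLam_subst1_self (x : ℕ) (A : Val) : (subst1Lam x A).skipLam x = Subst.id := by
  refine Subst.ext' ?_ rfl rfl
  funext z; rw [skipLam_lamS]
  split
  · next hz => subst hz; rfl
  · next hz => rw [subst1Lam_lamS, if_neg hz]; rfl

/-! ### Skip lists -/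

def applySkip (σ : Subst) (n : ℕ) : Subst :=
  if n % 2 = 0 then σ.skipLam (n / 2) else σ.skipMu (n / 2)

def Subst.skips (σ : Subst) (L : List ℕ) : Subst := L.foldl applySkip σ

@[simp] theorem skips_nil (σ : Subst) : σ.skips [] = σ := rfl

theorem skips_cons (σ : Subst) (n : ℕ) (L : List ℕ) :
    σ.skips (n :: L) = (applySkip σ n).skips L := rfl

theorem skips_concat (σ : Subst) (n : ℕ) (L : List ℕ) :
    σ.skips (L ++ [n]) = applySkip (σ.skips L) n := by
  simp [Subst.skips, List.foldl_append]

theorem applySkip_even (σ : Subst) (y : ℕ) : applySkip σ (2 * y) = σ.skipLam y := by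
  have h1 : (2 * y) % 2 = 0 := by omega
  have h2 : 2 * y / 2 = y := by omega
  simp [applySkip, h1, h2]

theorem applySkip_odd (σ : Subst) (α : ℕ) : applySkip σ (2 * α + 1) = σ.skipMu α := by
  have h1 : ¬ (2 * α + 1) % 2 = 0 := by omega
  have h2 : (2 * α + 1) / 2 = α := by omega
  simp [applySkip, h1, h2]

theorem applySkip_lamS (σ : Subst) (n z : ℕ) :
    (applySkip σ n).lamS z = if n = 2 * z then Val.var z else σ.lamS z := by
  unfold applySkip
  by_cases h : n % 2 = 0
  · rw [if_pos h, skipLam_lamS]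
    by_cases hz : z = n / 2
    · subst hz; rw [if_pos rfl, if_pos (by omega)]
    · rw [if_neg hz, if_neg (by omega)]
  · rw [if_neg h, skipMu_lamS, if_neg (by omega)]

theorem applySkip_muS (σ : Subst) (n α : ℕ) :
    (applySkip σ n).muS α = if n = 2 * α + 1 then Stk.svar α else σ.muS α := by
  unfold applySkip
  by_cases h : n % 2 = 0
  · rw [if_pos h, skipLam_muS, if_neg (by omega)]
  · rw [if_neg h, skipMu_muS]
    by_cases hz : α = n / 2
    · subst hz; rw [if_pos rfl, if_pos (by omega)]
    · rw [if_neg hz, if_neg (by omega)]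

theorem applySkip_trmS (σ : Subst) (n : ℕ) : (applySkip σ n).trmS = σ.trmS := by
  unfold applySkip; split <;> rfl

theorem skips_lamS (L : List ℕ) : ∀ (σ : Subst) (z : ℕ),
    (σ.skips L).lamS z = if 2 * z ∈ L then Val.var z else σ.lamS z := by
  induction L with
  | nil => intro σ z; simp
  | cons n L ih =>
    intro σ z
    rw [skips_cons, ih, applySkip_lamS]
    by_cases h1 : 2 * z ∈ L
    · simp [h1]
    · by_cases h2 : n = 2 * z <;> simp [h1, h2, eq_comm]

theorem skips_muS (L : List ℕ) : ∀ (σ : Subst) (α : ℕ),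
    (σ.skips L).muS α = if 2 * α + 1 ∈ L then Stk.svar α else σ.muS α := by
  induction L with
  | nil => intro σ α; simp
  | cons n L ih =>
    intro σ α
    rw [skips_cons, ih, applySkip_muS]
    by_cases h1 : 2 * α + 1 ∈ L
    · simp [h1]
    · by_cases h2 : n = 2 * α + 1 <;> simp [h1, h2, eq_comm]

theorem skips_trmS (L : List ℕ) : ∀ (σ : Subst), (σ.skips L).trmS = σ.trmS := by
  induction L with
  | nil => intro σ; rfl
  | cons n L ih => intro σ; rw [skips_cons, ih, applySkip_trmS]


/-! ### Maximal variable / maximal binder -/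

mutual
  def maxVarV : Val → ℕ
    | .var z => z
    | .lam y t => max y (maxVarT t)
    | .cns _ v => maxVarV v
    | .rcd fs => maxVarF fs
  def maxVarF : Flds → ℕ
    | .nil => 0
    | .cons _ v fs => max (maxVarV v) (maxVarF fs)
  def maxVarT : Trm → ℕ
    | .tvar a => a
    | .val v => maxVarV v
    | .app t u => max (maxVarT t) (maxVarT u)
    | .mu α t => max α (maxVarT t)
    | .prc p => maxVarP p
    | .prj v _ => maxVarV v
    | .cse v bs => max (maxVarV v) (maxVarB bs)
    | .dlt v w => max (maxVarV v) (maxVarV w)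
  def maxVarB : Brs → ℕ
    | .nil => 0
    | .cons _ y t bs => max y (max (maxVarT t) (maxVarB bs))
  def maxVarS : Stk → ℕ
    | .svar α => α
    | .push v π => max (maxVarV v) (maxVarS π)
    | .frame t π => max (maxVarT t) (maxVarS π)
  def maxVarP : Proc → ℕ
    | .mk t π => max (maxVarT t) (maxVarS π)
end

mutual
  def maxBndrV : Val → ℕ
    | .var _ => 0
    | .lam y t => max y (maxBndrT t)
    | .cns _ v => maxBndrV v
    | .rcd fs => maxBndrF fs
  def maxBndrF : Flds → ℕ
    | .nil => 0
    | .cons _ v fs => max (maxBndrV v) (maxBndrF fs)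
  def maxBndrT : Trm → ℕ
    | .tvar _ => 0
    | .val v => maxBndrV v
    | .app t u => max (maxBndrT t) (maxBndrT u)
    | .mu _ t => maxBndrT t
    | .prc p => maxBndrP p
    | .prj v _ => maxBndrV v
    | .cse v bs => max (maxBndrV v) (maxBndrB bs)
    | .dlt v w => max (maxBndrV v) (maxBndrV w)
  def maxBndrB : Brs → ℕ
    | .nil => 0
    | .cons _ y t bs => max y (max (maxBndrT t) (maxBndrB bs))
  def maxBndrS : Stk → ℕ
    | .svar _ => 0
    | .push v π => max (maxBndrV v) (maxBndrS π)
    | .frame t π => max (maxBndrT t) (maxBndrS π)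
  def maxBndrP : Proc → ℕ
    | .mk t π => max (maxBndrT t) (maxBndrS π)
end

/-! ### Substituting a variable that does not occur leaves the syntax unchanged -/

mutual
theorem noOccV (Z : ℕ) (u : Val) : ∀ (e : Val), maxVarV e < Z → substVal (subst1Lam Z u) e = e
  | .var z, h => by
      have : z ≠ Z := by simp [maxVarV] at h; omega
      simp [substVal, subst1Lam_lamS, this]
  | .lam y t, h => by
      have hy : y ≠ Z := by simp [maxVarV] at h; omega
      have ht : maxVarT t < Z := by simp [maxVarV] at h; omega
      simp [substVal, skipLam_subst1 u hy, noOccT Z u t ht]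
  | .cns c v, h => by simp [substVal, noOccV Z u v (by simpa [maxVarV] using h)]
  | .rcd fs, h => by simp [substVal, noOccF Z u fs (by simpa [maxVarV] using h)]
theorem noOccF (Z : ℕ) (u : Val) : ∀ (e : Flds), maxVarF e < Z → substFlds (subst1Lam Z u) e = e
  | .nil, _ => by simp [substFlds]
  | .cons l v fs, h => by
      have h' : maxVarV v < Z ∧ maxVarF fs < Z := by simp [maxVarF] at h; omega
      simp [substFlds, noOccV Z u v h'.1, noOccF Z u fs h'.2]
theorem noOccT (Z : ℕ) (u : Val) : ∀ (e : Trm), maxVarT e < Z → substTrm (subst1Lam Z u) e = e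
  | .tvar a, _ => by simp [substTrm, subst1Lam_trmS]
  | .val v, h => by simp [substTrm, noOccV Z u v (by simpa [maxVarT] using h)]
  | .app t t', h => by
      have h' : maxVarT t < Z ∧ maxVarT t' < Z := by simp [maxVarT] at h; omega
      simp [substTrm, noOccT Z u t h'.1, noOccT Z u t' h'.2]
  | .mu α t, h => by
      have ht : maxVarT t < Z := by simp [maxVarT] at h; omega
      simp [substTrm, skipMu_subst1 Z α u, noOccT Z u t ht]
  | .prc p, h => by simp [substTrm, noOccP Z u p (by simpa [maxVarT] using h)]
  | .prj v l, h => by simp [substTrm, noOccV Z u v (by simpa [maxVarT] using h)]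
  | .cse v bs, h => by
      have h' : maxVarV v < Z ∧ maxVarB bs < Z := by simp [maxVarT] at h; omega
      simp [substTrm, noOccV Z u v h'.1, noOccB Z u bs h'.2]
  | .dlt v w, h => by
      have h' : maxVarV v < Z ∧ maxVarV w < Z := by simp [maxVarT] at h; omega
      simp [substTrm, noOccV Z u v h'.1, noOccV Z u w h'.2]
theorem noOccB (Z : ℕ) (u : Val) : ∀ (e : Brs), maxVarB e < Z → substBrs (subst1Lam Z u) e = e
  | .nil, _ => by simp [substBrs]
  | .cons c y t bs, h => by
      have h' : y < Z ∧ maxVarT t < Z ∧ maxVarB bs < Z := by simp [maxVarB] at h; omega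
      simp [substBrs, skipLam_subst1 u (by omega : y ≠ Z), noOccT Z u t h'.2.1,
        noOccB Z u bs h'.2.2]
theorem noOccS (Z : ℕ) (u : Val) : ∀ (e : Stk), maxVarS e < Z → substStk (subst1Lam Z u) e = e
  | .svar α, _ => by simp [substStk, subst1Lam_muS]
  | .push v π, h => by
      have h' : maxVarV v < Z ∧ maxVarS π < Z := by simp [maxVarS] at h; omega
      simp [substStk, noOccV Z u v h'.1, noOccS Z u π h'.2]
  | .frame t π, h => by
      have h' : maxVarT t < Z ∧ maxVarS π < Z := by simp [maxVarS] at h; omega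
      simp [substStk, noOccT Z u t h'.1, noOccS Z u π h'.2]
theorem noOccP (Z : ℕ) (u : Val) : ∀ (e : Proc), maxVarP e < Z → substPrc (subst1Lam Z u) e = e
  | .mk t π, h => by
      have h' : maxVarT t < Z ∧ maxVarS π < Z := by simp [maxVarP] at h; omega
      simp [substPrc, noOccT Z u t h'.1, noOccS Z u π h'.2]
end


/-! ### Bounds -/

mutual
theorem bndr_le_varV : ∀ (e : Val), maxBndrV e ≤ maxVarV e
  | .var z => by simp [maxBndrV, maxVarV]
  | .lam y t => by
      have := bndr_le_varT t; simp [maxBndrV, maxVarV]; omega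
  | .cns c v => by simpa [maxBndrV, maxVarV] using bndr_le_varV v
  | .rcd fs => by simpa [maxBndrV, maxVarV] using bndr_le_varF fs
theorem bndr_le_varF : ∀ (e : Flds), maxBndrF e ≤ maxVarF e
  | .nil => le_refl _
  | .cons l v fs => by
      have := bndr_le_varV v; have := bndr_le_varF fs
      simp [maxBndrF, maxVarF]; omega
theorem bndr_le_varT : ∀ (e : Trm), maxBndrT e ≤ maxVarT e
  | .tvar a => by simp [maxBndrT, maxVarT]
  | .val v => by simpa [maxBndrT, maxVarT] using bndr_le_varV v
  | .app t u => by
      have := bndr_le_varT t; have := bndr_le_varT u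
      simp [maxBndrT, maxVarT]; omega
  | .mu α t => by
      have := bndr_le_varT t; simp [maxBndrT, maxVarT]; omega
  | .prc p => by simpa [maxBndrT, maxVarT] using bndr_le_varP p
  | .prj v l => by simpa [maxBndrT, maxVarT] using bndr_le_varV v
  | .cse v bs => by
      have := bndr_le_varV v; have := bndr_le_varB bs
      simp [maxBndrT, maxVarT]; omega
  | .dlt v w => by
      have := bndr_le_varV v; have := bndr_le_varV w
      simp [maxBndrT, maxVarT]; omega
theorem bndr_le_varB : ∀ (e : Brs), maxBndrB e ≤ maxVarB e
  | .nil => le_refl _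
  | .cons c y t bs => by
      have := bndr_le_varT t; have := bndr_le_varB bs
      simp [maxBndrB, maxVarB]; omega
theorem bndr_le_varS : ∀ (e : Stk), maxBndrS e ≤ maxVarS e
  | .svar α => by simp [maxBndrS, maxVarS]
  | .push v π => by
      have := bndr_le_varV v; have := bndr_le_varS π
      simp [maxBndrS, maxVarS]; omega
  | .frame t π => by
      have := bndr_le_varT t; have := bndr_le_varS π
      simp [maxBndrS, maxVarS]; omega
theorem bndr_le_varP : ∀ (e : Proc), maxBndrP e ≤ maxVarP e
  | .mk t π => by
      have := bndr_le_varT t; have := bndr_le_varS π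
      simp [maxBndrP, maxVarP]; omega
end

mutual
theorem fv_le_varV : ∀ (e : Val) (k : VKind) (n : ℕ), (k, n) ∈ fvVal e → n ≤ maxVarV e
  | .var z, k, n => by simp [fvVal, maxVarV]; rintro rfl rfl; rfl
  | .lam y t, k, n => by
      intro h
      simp [fvVal] at h
      have := fv_le_varT t k n h.1
      simp [maxVarV]; omega
  | .cns c v, k, n => fun h => by simpa [maxVarV] using fv_le_varV v k n (by simpa [fvVal] using h)
  | .rcd fs, k, n => fun h => by simpa [maxVarV] using fv_le_varF fs k n (by simpa [fvVal] using h)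
theorem fv_le_varF : ∀ (e : Flds) (k : VKind) (n : ℕ), (k, n) ∈ fvFlds e → n ≤ maxVarF e
  | .nil, k, n => by simp [fvFlds]
  | .cons l v fs, k, n => by
      intro h
      simp [fvFlds] at h
      rcases h with h | h
      · have := fv_le_varV v k n h; simp [maxVarF]; omega
      · have := fv_le_varF fs k n h; simp [maxVarF]; omega
theorem fv_le_varT : ∀ (e : Trm) (k : VKind) (n : ℕ), (k, n) ∈ fvTrm e → n ≤ maxVarT e
  | .tvar a, k, n => by simp [fvTrm, maxVarT]; rintro rfl rfl; rfl
  | .val v, k, n => fun h => by simpa [maxVarT] using fv_le_varV v k n (by simpa [fvTrm] using h)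
  | .app t u, k, n => by
      intro h
      simp [fvTrm] at h
      rcases h with h | h
      · have := fv_le_varT t k n h; simp [maxVarT]; omega
      · have := fv_le_varT u k n h; simp [maxVarT]; omega
  | .mu α t, k, n => by
      intro h
      simp [fvTrm] at h
      have := fv_le_varT t k n h.1
      simp [maxVarT]; omega
  | .prc p, k, n => fun h => by simpa [maxVarT] using fv_le_varP p k n (by simpa [fvTrm] using h)
  | .prj v l, k, n => fun h => by simpa [maxVarT] using fv_le_varV v k n (by simpa [fvTrm] using h)
  | .cse v bs, k, n => by
      intro h
      simp [fvTrm] at h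
      rcases h with h | h
      · have := fv_le_varV v k n h; simp [maxVarT]; omega
      · have := fv_le_varB bs k n h; simp [maxVarT]; omega
  | .dlt v w, k, n => by
      intro h
      simp [fvTrm] at h
      rcases h with h | h
      · have := fv_le_varV v k n h; simp [maxVarT]; omega
      · have := fv_le_varV w k n h; simp [maxVarT]; omega
theorem fv_le_varB : ∀ (e : Brs) (k : VKind) (n : ℕ), (k, n) ∈ fvBrs e → n ≤ maxVarB e
  | .nil, k, n => by simp [fvBrs]
  | .cons c y t bs, k, n => by
      intro h
      simp [fvBrs] at h
      rcases h with h | h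
      · have := fv_le_varT t k n h.1; simp [maxVarB]; omega
      · have := fv_le_varB bs k n h; simp [maxVarB]; omega
theorem fv_le_varS : ∀ (e : Stk) (k : VKind) (n : ℕ), (k, n) ∈ fvStk e → n ≤ maxVarS e
  | .svar α, k, n => by simp [fvStk, maxVarS]; rintro rfl rfl; rfl
  | .push v π, k, n => by
      intro h
      simp [fvStk] at h
      rcases h with h | h
      · have := fv_le_varV v k n h; simp [maxVarS]; omega
      · have := fv_le_varS π k n h; simp [maxVarS]; omega
  | .frame t π, k, n => by
      intro h
      simp [fvStk] at h
      rcases h with h | h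
      · have := fv_le_varT t k n h; simp [maxVarS]; omega
      · have := fv_le_varS π k n h; simp [maxVarS]; omega
theorem fv_le_varP : ∀ (e : Proc) (k : VKind) (n : ℕ), (k, n) ∈ fvPrc e → n ≤ maxVarP e
  | .mk t π, k, n => by
      intro h
      simp [fvPrc] at h
      rcases h with h | h
      · have := fv_le_varT t k n h; simp [maxVarP]; omega
      · have := fv_le_varS π k n h; simp [maxVarP]; omega
end


/-! ### Extensionality of substitution on free variables -/

def AgreeOn (σ σ' : Subst) (S : Set (VKind × ℕ)) : Prop :=
  (∀ z, (VKind.lam, z) ∈ S → σ.lamS z = σ'.lamS z) ∧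
  (∀ α, (VKind.mu, α) ∈ S → σ.muS α = σ'.muS α) ∧
  (∀ a, (VKind.trm, a) ∈ S → σ.trmS a = σ'.trmS a)

theorem AgreeOn.mono {σ σ' : Subst} {S T : Set (VKind × ℕ)} (hsub : S ⊆ T)
    (h : AgreeOn σ σ' T) : AgreeOn σ σ' S :=
  ⟨fun z hz => h.1 z (hsub hz), fun α hα => h.2.1 α (hsub hα), fun a ha => h.2.2 a (hsub ha)⟩

theorem AgreeOn.skipLam {σ σ' : Subst} {S : Set (VKind × ℕ)} (y : ℕ)
    (h : AgreeOn σ σ' (S \ {(VKind.lam, y)})) : AgreeOn (σ.skipLam y) (σ'.skipLam y) S := by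
  refine ⟨fun z hz => ?_, fun α hα => ?_, fun a ha => ?_⟩
  · rw [skipLam_lamS, skipLam_lamS]
    by_cases hy : z = y
    · simp [hy]
    · rw [if_neg hy, if_neg hy]
      exact h.1 z ⟨hz, by simp [hy]⟩
  · rw [skipLam_muS, skipLam_muS]; exact h.2.1 α ⟨hα, by simp⟩
  · rw [skipLam_trmS, skipLam_trmS]; exact h.2.2 a ⟨ha, by simp⟩

theorem AgreeOn.skipMu {σ σ' : Subst} {S : Set (VKind × ℕ)} (α : ℕ)
    (h : AgreeOn σ σ' (S \ {(VKind.mu, α)})) : AgreeOn (σ.skipMu α) (σ'.skipMu α) S := by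
  refine ⟨fun z hz => ?_, fun β hβ => ?_, fun a ha => ?_⟩
  · rw [skipMu_lamS, skipMu_lamS]; exact h.1 z ⟨hz, by simp⟩
  · rw [skipMu_muS, skipMu_muS]
    by_cases hy : β = α
    · simp [hy]
    · rw [if_neg hy, if_neg hy]
      exact h.2.1 β ⟨hβ, by simp [hy]⟩
  · rw [skipMu_trmS, skipMu_trmS]; exact h.2.2 a ⟨ha, by simp⟩

mutual
theorem extV : ∀ (e : Val) (σ σ' : Subst), AgreeOn σ σ' (fvVal e) →
    substVal σ e = substVal σ' e
  | .var z, σ, σ', h => by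
      simpa [substVal] using h.1 z (by simp [fvVal])
  | .lam y t, σ, σ', h => by
      have h' : AgreeOn (σ.skipLam y) (σ'.skipLam y) (fvTrm t) :=
        AgreeOn.skipLam y (by simpa [fvVal] using h)
      simp [substVal, extT t _ _ h']
  | .cns c v, σ, σ', h => by simp [substVal, extV v σ σ' (by simpa [fvVal] using h)]
  | .rcd fs, σ, σ', h => by simp [substVal, extF fs σ σ' (by simpa [fvVal] using h)]
theorem extF : ∀ (e : Flds) (σ σ' : Subst), AgreeOn σ σ' (fvFlds e) →
    substFlds σ e = substFlds σ' e
  | .nil, _, _, _ => rfl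
  | .cons l v fs, σ, σ', h => by
      have h1 := h.mono (by simp [fvFlds] : fvVal v ⊆ fvFlds (.cons l v fs))
      have h2 := h.mono (by simp [fvFlds] : fvFlds fs ⊆ fvFlds (.cons l v fs))
      simp [substFlds, extV v σ σ' h1, extF fs σ σ' h2]
theorem extT : ∀ (e : Trm) (σ σ' : Subst), AgreeOn σ σ' (fvTrm e) →
    substTrm σ e = substTrm σ' e
  | .tvar a, σ, σ', h => by simpa [substTrm] using h.2.2 a (by simp [fvTrm])
  | .val v, σ, σ', h => by simp [substTrm, extV v σ σ' (by simpa [fvTrm] using h)]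
  | .app t u, σ, σ', h => by
      have h1 := h.mono (by simp [fvTrm] : fvTrm t ⊆ fvTrm (.app t u))
      have h2 := h.mono (by simp [fvTrm] : fvTrm u ⊆ fvTrm (.app t u))
      simp [substTrm, extT t σ σ' h1, extT u σ σ' h2]
  | .mu α t, σ, σ', h => by
      have h' : AgreeOn (σ.skipMu α) (σ'.skipMu α) (fvTrm t) :=
        AgreeOn.skipMu α (by simpa [fvTrm] using h)
      simp [substTrm, extT t _ _ h']
  | .prc p, σ, σ', h => by simp [substTrm, extP p σ σ' (by simpa [fvTrm] using h)]
  | .prj v l, σ, σ', h => by simp [substTrm, extV v σ σ' (by simpa [fvTrm] using h)]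
  | .cse v bs, σ, σ', h => by
      have h1 := h.mono (by simp [fvTrm] : fvVal v ⊆ fvTrm (.cse v bs))
      have h2 := h.mono (by simp [fvTrm] : fvBrs bs ⊆ fvTrm (.cse v bs))
      simp [substTrm, extV v σ σ' h1, extB bs σ σ' h2]
  | .dlt v w, σ, σ', h => by
      have h1 := h.mono (by simp [fvTrm] : fvVal v ⊆ fvTrm (.dlt v w))
      have h2 := h.mono (by simp [fvTrm] : fvVal w ⊆ fvTrm (.dlt v w))
      simp [substTrm, extV v σ σ' h1, extV w σ σ' h2]
theorem extB : ∀ (e : Brs) (σ σ' : Subst), AgreeOn σ σ' (fvBrs e) →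
    substBrs σ e = substBrs σ' e
  | .nil, _, _, _ => rfl
  | .cons c y t bs, σ, σ', h => by
      have h1 : AgreeOn (σ.skipLam y) (σ'.skipLam y) (fvTrm t) := by
        refine AgreeOn.skipLam y (h.mono ?_)
        intro p hp
        simp [fvBrs]
        exact Or.inl ⟨hp.1, hp.2⟩
      have h2 := h.mono (by simp [fvBrs] : fvBrs bs ⊆ fvBrs (.cons c y t bs))
      simp [substBrs, extT t _ _ h1, extB bs σ σ' h2]
theorem extS : ∀ (e : Stk) (σ σ' : Subst), AgreeOn σ σ' (fvStk e) →
    substStk σ e = substStk σ' e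
  | .svar α, σ, σ', h => by simpa [substStk] using h.2.1 α (by simp [fvStk])
  | .push v π, σ, σ', h => by
      have h1 := h.mono (by simp [fvStk] : fvVal v ⊆ fvStk (.push v π))
      have h2 := h.mono (by simp [fvStk] : fvStk π ⊆ fvStk (.push v π))
      simp [substStk, extV v σ σ' h1, extS π σ σ' h2]
  | .frame t π, σ, σ', h => by
      have h1 := h.mono (by simp [fvStk] : fvTrm t ⊆ fvStk (.frame t π))
      have h2 := h.mono (by simp [fvStk] : fvStk π ⊆ fvStk (.frame t π))
      simp [substStk, extT t σ σ' h1, extS π σ σ' h2]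
theorem extP : ∀ (e : Proc) (σ σ' : Subst), AgreeOn σ σ' (fvPrc e) →
    substPrc σ e = substPrc σ' e
  | .mk t π, σ, σ', h => by
      have h1 := h.mono (by simp [fvPrc] : fvTrm t ⊆ fvPrc (.mk t π))
      have h2 := h.mono (by simp [fvPrc] : fvStk π ⊆ fvPrc (.mk t π))
      simp [substPrc, extT t σ σ' h1, extS π σ σ' h2]
end


/-! ### Bound on variables of a substituted syntax -/

def BoundedOn (τ : Subst) (m B : ℕ) : Prop :=
  (∀ z ≤ m, maxVarV (τ.lamS z) ≤ max z B) ∧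
  (∀ α ≤ m, maxVarS (τ.muS α) ≤ max α B) ∧
  (∀ a ≤ m, maxVarT (τ.trmS a) ≤ max a B)

theorem BoundedOn.mono {τ : Subst} {m m' B : ℕ} (hm : m' ≤ m) (h : BoundedOn τ m B) :
    BoundedOn τ m' B :=
  ⟨fun z hz => h.1 z (le_trans hz hm), fun α hα => h.2.1 α (le_trans hα hm),
   fun a ha => h.2.2 a (le_trans ha hm)⟩

theorem BoundedOn.skipLam {τ : Subst} {m B : ℕ} (y : ℕ) (h : BoundedOn τ m B) :
    BoundedOn (τ.skipLam y) m B := by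
  refine ⟨fun z hz => ?_, fun α hα => by rw [skipLam_muS]; exact h.2.1 α hα,
    fun a ha => by rw [skipLam_trmS]; exact h.2.2 a ha⟩
  rw [skipLam_lamS]
  split
  · next hzy => subst hzy; simp [maxVarV]
  · exact h.1 z hz

theorem BoundedOn.skipMu {τ : Subst} {m B : ℕ} (α : ℕ) (h : BoundedOn τ m B) :
    BoundedOn (τ.skipMu α) m B := by
  refine ⟨fun z hz => by rw [skipMu_lamS]; exact h.1 z hz, fun β hβ => ?_,
    fun a ha => by rw [skipMu_trmS]; exact h.2.2 a ha⟩
  rw [skipMu_muS]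
  split
  · next hzy => subst hzy; simp [maxVarS]
  · exact h.2.1 β hβ

mutual
theorem boundV : ∀ (e : Val) (τ : Subst) (B : ℕ), BoundedOn τ (maxVarV e) B →
    maxVarV (substVal τ e) ≤ max (maxVarV e) B
  | .var z, τ, B, h => by simpa [substVal, maxVarV] using h.1 z (le_refl _)
  | .lam y t, τ, B, h => by
      have ht := boundT t (τ.skipLam y) B
        ((h.mono (by simp [maxVarV])).skipLam y)
      simp [substVal, maxVarV] at *; omega
  | .cns c v, τ, B, h => by
      have := boundV v τ B (h.mono (by simp [maxVarV]))
      simpa [substVal, maxVarV] using this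
  | .rcd fs, τ, B, h => by
      have := boundF fs τ B (h.mono (by simp [maxVarV]))
      simpa [substVal, maxVarV] using this
theorem boundF : ∀ (e : Flds) (τ : Subst) (B : ℕ), BoundedOn τ (maxVarF e) B →
    maxVarF (substFlds τ e) ≤ max (maxVarF e) B
  | .nil, τ, B, h => by simp [substFlds, maxVarF]
  | .cons l v fs, τ, B, h => by
      have h1 := boundV v τ B (h.mono (by simp [maxVarF]))
      have h2 := boundF fs τ B (h.mono (by simp [maxVarF]))
      simp [substFlds, maxVarF] at *; omega
theorem boundT : ∀ (e : Trm) (τ : Subst) (B : ℕ), BoundedOn τ (maxVarT e) B →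
    maxVarT (substTrm τ e) ≤ max (maxVarT e) B
  | .tvar a, τ, B, h => by simpa [substTrm, maxVarT] using h.2.2 a (le_refl _)
  | .val v, τ, B, h => by
      have := boundV v τ B (by simpa [maxVarT] using h)
      simpa [substTrm, maxVarT] using this
  | .app t u, τ, B, h => by
      have h1 := boundT t τ B (h.mono (by simp [maxVarT]))
      have h2 := boundT u τ B (h.mono (by simp [maxVarT]))
      simp [substTrm, maxVarT] at *; omega
  | .mu α t, τ, B, h => by
      have ht := boundT t (τ.skipMu α) B ((h.mono (by simp [maxVarT])).skipMu α)
      simp [substTrm, maxVarT] at *; omega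
  | .prc p, τ, B, h => by
      have := boundP p τ B (by simpa [maxVarT] using h)
      simpa [substTrm, maxVarT] using this
  | .prj v l, τ, B, h => by
      have := boundV v τ B (by simpa [maxVarT] using h)
      simpa [substTrm, maxVarT] using this
  | .cse v bs, τ, B, h => by
      have h1 := boundV v τ B (h.mono (by simp [maxVarT]))
      have h2 := boundB bs τ B (h.mono (by simp [maxVarT]))
      simp [substTrm, maxVarT] at *; omega
  | .dlt v w, τ, B, h => by
      have h1 := boundV v τ B (h.mono (by simp [maxVarT]))
      have h2 := boundV w τ B (h.mono (by simp [maxVarT]))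
      simp [substTrm, maxVarT] at *; omega
theorem boundB : ∀ (e : Brs) (τ : Subst) (B : ℕ), BoundedOn τ (maxVarB e) B →
    maxVarB (substBrs τ e) ≤ max (maxVarB e) B
  | .nil, τ, B, h => by simp [substBrs, maxVarB]
  | .cons c y t bs, τ, B, h => by
      have h1 := boundT t (τ.skipLam y) B ((h.mono (by simp [maxVarB])).skipLam y)
      have h2 := boundB bs τ B (h.mono (by simp [maxVarB]))
      simp [substBrs, maxVarB] at *; omega
theorem boundS : ∀ (e : Stk) (τ : Subst) (B : ℕ), BoundedOn τ (maxVarS e) B →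
    maxVarS (substStk τ e) ≤ max (maxVarS e) B
  | .svar α, τ, B, h => by simpa [substStk, maxVarS] using h.2.1 α (le_refl _)
  | .push v π, τ, B, h => by
      have h1 := boundV v τ B (h.mono (by simp [maxVarS]))
      have h2 := boundS π τ B (h.mono (by simp [maxVarS]))
      simp [substStk, maxVarS] at *; omega
  | .frame t π, τ, B, h => by
      have h1 := boundT t τ B (h.mono (by simp [maxVarS]))
      have h2 := boundS π τ B (h.mono (by simp [maxVarS]))
      simp [substStk, maxVarS] at *; omega
theorem boundP : ∀ (e : Proc) (τ : Subst) (B : ℕ), BoundedOn τ (maxVarP e) B →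
    maxVarP (substPrc τ e) ≤ max (maxVarP e) B
  | .mk t π, τ, B, h => by
      have h1 := boundT t τ B (h.mono (by simp [maxVarP]))
      have h2 := boundS π τ B (h.mono (by simp [maxVarP]))
      simp [substPrc, maxVarP] at *; omega
end


/-! ### Grafting (composition with a single-variable substitution) -/

def compSub (Z : ℕ) (u : Val) (τ : Subst) : Subst :=
  ⟨fun z => substVal (subst1Lam Z u) (τ.lamS z),
   fun α => substStk (subst1Lam Z u) (τ.muS α),
   fun a => substTrm (subst1Lam Z u) (τ.trmS a)⟩

theorem compSub_skipLam {Z y : ℕ} (u : Val) (τ : Subst) (hy : y ≠ Z) :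
    compSub Z u (τ.skipLam y) = (compSub Z u τ).skipLam y := by
  refine Subst.ext' ?_ rfl rfl
  funext z
  show substVal (subst1Lam Z u) ((τ.skipLam y).lamS z) = ((compSub Z u τ).skipLam y).lamS z
  rw [skipLam_lamS, skipLam_lamS]
  split
  · simp [substVal, subst1Lam_lamS, hy]
  · rfl

theorem compSub_skipMu (Z α : ℕ) (u : Val) (τ : Subst) :
    compSub Z u (τ.skipMu α) = (compSub Z u τ).skipMu α := by
  refine Subst.ext' rfl ?_ rfl
  funext β
  show substStk (subst1Lam Z u) ((τ.skipMu α).muS β) = ((compSub Z u τ).skipMu α).muS β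
  rw [skipMu_muS, skipMu_muS]
  split
  · simp [substStk, subst1Lam_muS]
  · rfl

mutual
theorem graftV (Z : ℕ) (u : Val) : ∀ (e : Val) (τ : Subst), maxBndrV e < Z →
    substVal (subst1Lam Z u) (substVal τ e) = substVal (compSub Z u τ) e
  | .var z, τ, _ => rfl
  | .lam y t, τ, h => by
      have hy : y ≠ Z := by simp [maxBndrV] at h; omega
      have ht : maxBndrT t < Z := by simp [maxBndrV] at h; omega
      simp [substVal, skipLam_subst1 u hy, graftT Z u t (τ.skipLam y) ht, compSub_skipLam u τ hy]
  | .cns c v, τ, h => by simp [substVal, graftV Z u v τ (by simpa [maxBndrV] using h)]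
  | .rcd fs, τ, h => by simp [substVal, graftF Z u fs τ (by simpa [maxBndrV] using h)]
theorem graftF (Z : ℕ) (u : Val) : ∀ (e : Flds) (τ : Subst), maxBndrF e < Z →
    substFlds (subst1Lam Z u) (substFlds τ e) = substFlds (compSub Z u τ) e
  | .nil, τ, _ => rfl
  | .cons l v fs, τ, h => by
      have h' : maxBndrV v < Z ∧ maxBndrF fs < Z := by simp [maxBndrF] at h; omega
      simp [substFlds, graftV Z u v τ h'.1, graftF Z u fs τ h'.2]
theorem graftT (Z : ℕ) (u : Val) : ∀ (e : Trm) (τ : Subst), maxBndrT e < Z →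
    substTrm (subst1Lam Z u) (substTrm τ e) = substTrm (compSub Z u τ) e
  | .tvar a, τ, _ => rfl
  | .val v, τ, h => by simp [substTrm, graftV Z u v τ (by simpa [maxBndrT] using h)]
  | .app t t', τ, h => by
      have h' : maxBndrT t < Z ∧ maxBndrT t' < Z := by simp [maxBndrT] at h; omega
      simp [substTrm, graftT Z u t τ h'.1, graftT Z u t' τ h'.2]
  | .mu α t, τ, h => by
      have ht : maxBndrT t < Z := by simpa [maxBndrT] using h
      simp [substTrm, skipMu_subst1 Z α u, graftT Z u t (τ.skipMu α) ht,
        compSub_skipMu Z α u τ]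
  | .prc p, τ, h => by simp [substTrm, graftP Z u p τ (by simpa [maxBndrT] using h)]
  | .prj v l, τ, h => by simp [substTrm, graftV Z u v τ (by simpa [maxBndrT] using h)]
  | .cse v bs, τ, h => by
      have h' : maxBndrV v < Z ∧ maxBndrB bs < Z := by simp [maxBndrT] at h; omega
      simp [substTrm, graftV Z u v τ h'.1, graftB Z u bs τ h'.2]
  | .dlt v w, τ, h => by
      have h' : maxBndrV v < Z ∧ maxBndrV w < Z := by simp [maxBndrT] at h; omega
      simp [substTrm, graftV Z u v τ h'.1, graftV Z u w τ h'.2]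
theorem graftB (Z : ℕ) (u : Val) : ∀ (e : Brs) (τ : Subst), maxBndrB e < Z →
    substBrs (subst1Lam Z u) (substBrs τ e) = substBrs (compSub Z u τ) e
  | .nil, τ, _ => rfl
  | .cons c y t bs, τ, h => by
      have h' : y < Z ∧ maxBndrT t < Z ∧ maxBndrB bs < Z := by simp [maxBndrB] at h; omega
      simp [substBrs, skipLam_subst1 u (by omega : y ≠ Z), graftT Z u t (τ.skipLam y) h'.2.1,
        graftB Z u bs τ h'.2.2, compSub_skipLam u τ (by omega : y ≠ Z)]
theorem graftS (Z : ℕ) (u : Val) : ∀ (e : Stk) (τ : Subst), maxBndrS e < Z →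
    substStk (subst1Lam Z u) (substStk τ e) = substStk (compSub Z u τ) e
  | .svar α, τ, _ => rfl
  | .push v π, τ, h => by
      have h' : maxBndrV v < Z ∧ maxBndrS π < Z := by simp [maxBndrS] at h; omega
      simp [substStk, graftV Z u v τ h'.1, graftS Z u π τ h'.2]
  | .frame t π, τ, h => by
      have h' : maxBndrT t < Z ∧ maxBndrS π < Z := by simp [maxBndrS] at h; omega
      simp [substStk, graftT Z u t τ h'.1, graftS Z u π τ h'.2]
theorem graftP (Z : ℕ) (u : Val) : ∀ (e : Proc) (τ : Subst), maxBndrP e < Z →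
    substPrc (subst1Lam Z u) (substPrc τ e) = substPrc (compSub Z u τ) e
  | .mk t π, τ, h => by
      have h' : maxBndrT t < Z ∧ maxBndrS π < Z := by simp [maxBndrP] at h; omega
      simp [substPrc, graftT Z u t τ h'.1, graftS Z u π τ h'.2]
end


/-! ### The hole-naming translation Φ -/

mutual
  def phiV (x base : ℕ) : Bool → List ℕ → Val → Val
    | b, L, .var z =>
        if b = true ∧ z = x then .var (base + Encodable.encode L) else .var z
    | b, L, .lam y t => .lam y (phiT x base (if y = x then false else b) (L ++ [2 * y]) t)
    | b, L, .cns c v => .cns c (phiV x base b L v)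
    | b, L, .rcd fs => .rcd (phiF x base b L fs)
  def phiF (x base : ℕ) : Bool → List ℕ → Flds → Flds
    | _, _, .nil => .nil
    | b, L, .cons l v fs => .cons l (phiV x base b L v) (phiF x base b L fs)
  def phiT (x base : ℕ) : Bool → List ℕ → Trm → Trm
    | b, L, .tvar a => .tvar a
    | b, L, .val v => .val (phiV x base b L v)
    | b, L, .app t u => .app (phiT x base b L t) (phiT x base b L u)
    | b, L, .mu α t => .mu α (phiT x base b (L ++ [2 * α + 1]) t)
    | b, L, .prc p => .prc (phiP x base b L p)
    | b, L, .prj v l => .prj (phiV x base b L v) l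
    | b, L, .cse v bs => .cse (phiV x base b L v) (phiB x base b L bs)
    | b, L, .dlt v w => .dlt (phiV x base b L v) (phiV x base b L w)
  def phiB (x base : ℕ) : Bool → List ℕ → Brs → Brs
    | _, _, .nil => .nil
    | b, L, .cons c y t bs =>
        .cons c y (phiT x base (if y = x then false else b) (L ++ [2 * y]) t)
          (phiB x base b L bs)
  def phiS (x base : ℕ) : Bool → List ℕ → Stk → Stk
    | b, L, .svar α => .svar α
    | b, L, .push v π => .push (phiV x base b L v) (phiS x base b L π)
    | b, L, .frame t π => .frame (phiT x base b L t) (phiS x base b L π)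
  def phiP (x base : ℕ) : Bool → List ℕ → Proc → Proc
    | b, L, .mk t π => .mk (phiT x base b L t) (phiS x base b L π)
end

mutual
theorem phiBndrV (x base : ℕ) : ∀ (e : Val) (b : Bool) (L : List ℕ),
    maxBndrV (phiV x base b L e) = maxBndrV e
  | .var z, b, L => by unfold phiV; split <;> simp [maxBndrV]
  | .lam y t, b, L => by simp [phiV, maxBndrV, phiBndrT x base t]
  | .cns c v, b, L => by simp [phiV, maxBndrV, phiBndrV x base v]
  | .rcd fs, b, L => by simp [phiV, maxBndrV, phiBndrF x base fs]
theorem phiBndrF (x base : ℕ) : ∀ (e : Flds) (b : Bool) (L : List ℕ),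
    maxBndrF (phiF x base b L e) = maxBndrF e
  | .nil, b, L => rfl
  | .cons l v fs, b, L => by simp [phiF, maxBndrF, phiBndrV x base v, phiBndrF x base fs]
theorem phiBndrT (x base : ℕ) : ∀ (e : Trm) (b : Bool) (L : List ℕ),
    maxBndrT (phiT x base b L e) = maxBndrT e
  | .tvar a, b, L => rfl
  | .val v, b, L => by simp [phiT, maxBndrT, phiBndrV x base v]
  | .app t u, b, L => by simp [phiT, maxBndrT, phiBndrT x base t, phiBndrT x base u]
  | .mu α t, b, L => by simp [phiT, maxBndrT, phiBndrT x base t]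
  | .prc p, b, L => by simp [phiT, maxBndrT, phiBndrP x base p]
  | .prj v l, b, L => by simp [phiT, maxBndrT, phiBndrV x base v]
  | .cse v bs, b, L => by simp [phiT, maxBndrT, phiBndrV x base v, phiBndrB x base bs]
  | .dlt v w, b, L => by simp [phiT, maxBndrT, phiBndrV x base v, phiBndrV x base w]
theorem phiBndrB (x base : ℕ) : ∀ (e : Brs) (b : Bool) (L : List ℕ),
    maxBndrB (phiB x base b L e) = maxBndrB e
  | .nil, b, L => rfl
  | .cons c y t bs, b, L => by simp [phiB, maxBndrB, phiBndrT x base t, phiBndrB x base bs]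
theorem phiBndrS (x base : ℕ) : ∀ (e : Stk) (b : Bool) (L : List ℕ),
    maxBndrS (phiS x base b L e) = maxBndrS e
  | .svar α, b, L => rfl
  | .push v π, b, L => by simp [phiS, maxBndrS, phiBndrV x base v, phiBndrS x base π]
  | .frame t π, b, L => by simp [phiS, maxBndrS, phiBndrT x base t, phiBndrS x base π]
theorem phiBndrP (x base : ℕ) : ∀ (e : Proc) (b : Bool) (L : List ℕ),
    maxBndrP (phiP x base b L e) = maxBndrP e
  | .mk t π, b, L => by simp [phiP, maxBndrP, phiBndrT x base t, phiBndrS x base π]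
end

mutual
theorem phiFvV (x base : ℕ) : ∀ (e : Val) (b : Bool) (L : List ℕ) (k : VKind) (n : ℕ),
    (k, n) ∈ fvVal (phiV x base b L e) → (k, n) ∈ fvVal e ∨ (k = VKind.lam ∧ base ≤ n)
  | .var z, b, L, k, n => by
      unfold phiV
      split
    
      · intro h
        simp [fvVal] at h
        exact Or.inr ⟨h.1, by omega⟩
      · intro h; exact Or.inl h
  | .lam y t, b, L, k, n => by
      intro h
      simp only [phiV, fvVal, Set.mem_diff] at h ⊢
      rcases phiFvT x base t _ _ k n h.1 with h' | h'
      · exact Or.inl ⟨h', h.2⟩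
      · exact Or.inr h'
  | .cns c v, b, L, k, n => fun h => by
      simpa [fvVal] using phiFvV x base v b L k n (by simpa [phiV, fvVal] using h)
  | .rcd fs, b, L, k, n => fun h => by
      simpa [fvVal] using phiFvF x base fs b L k n (by simpa [phiV, fvVal] using h)
theorem phiFvF (x base : ℕ) : ∀ (e : Flds) (b : Bool) (L : List ℕ) (k : VKind) (n : ℕ),
    (k, n) ∈ fvFlds (phiF x base b L e) → (k, n) ∈ fvFlds e ∨ (k = VKind.lam ∧ base ≤ n)
  | .nil, b, L, k, n => by simp [phiF, fvFlds]
  | .cons l v fs, b, L, k, n => by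
      intro h
      simp only [phiF, fvFlds, Set.mem_union] at h ⊢
      rcases h with h | h
      · rcases phiFvV x base v b L k n h with h' | h'
        · exact Or.inl (Or.inl h')
        · exact Or.inr h'
      · rcases phiFvF x base fs b L k n h with h' | h'
        · exact Or.inl (Or.inr h')
        · exact Or.inr h'
theorem phiFvT (x base : ℕ) : ∀ (e : Trm) (b : Bool) (L : List ℕ) (k : VKind) (n : ℕ),
    (k, n) ∈ fvTrm (phiT x base b L e) → (k, n) ∈ fvTrm e ∨ (k = VKind.lam ∧ base ≤ n)
  | .tvar a, b, L, k, n => fun h => Or.inl (by simpa [phiT, fvTrm] using h)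
  | .val v, b, L, k, n => fun h => by
      simpa [fvTrm] using phiFvV x base v b L k n (by simpa [phiT, fvTrm] using h)
  | .app t u, b, L, k, n => by
      intro h
      simp only [phiT, fvTrm, Set.mem_union] at h ⊢
      rcases h with h | h
      · rcases phiFvT x base t b L k n h with h' | h'
        · exact Or.inl (Or.inl h')
        · exact Or.inr h'
      · rcases phiFvT x base u b L k n h with h' | h'
        · exact Or.inl (Or.inr h')
        · exact Or.inr h'
  | .mu α t, b, L, k, n => by
      intro h
      simp only [phiT, fvTrm, Set.mem_diff] at h ⊢
      rcases phiFvT x base t _ _ k n h.1 with h' | h'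
      · exact Or.inl ⟨h', h.2⟩
      · exact Or.inr h'
  | .prc p, b, L, k, n => fun h => by
      simpa [fvTrm] using phiFvP x base p b L k n (by simpa [phiT, fvTrm] using h)
  | .prj v l, b, L, k, n => fun h => by
      simpa [fvTrm] using phiFvV x base v b L k n (by simpa [phiT, fvTrm] using h)
  | .cse v bs, b, L, k, n => by
      intro h
      simp only [phiT, fvTrm, Set.mem_union] at h ⊢
      rcases h with h | h
      · rcases phiFvV x base v b L k n h with h' | h'
        · exact Or.inl (Or.inl h')
        · exact Or.inr h'
      · rcases phiFvB x base bs b L k n h with h' | h'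
        · exact Or.inl (Or.inr h')
        · exact Or.inr h'
  | .dlt v w, b, L, k, n => by
      intro h
      simp only [phiT, fvTrm, Set.mem_union] at h ⊢
      rcases h with h | h
      · rcases phiFvV x base v b L k n h with h' | h'
        · exact Or.inl (Or.inl h')
        · exact Or.inr h'
      · rcases phiFvV x base w b L k n h with h' | h'
        · exact Or.inl (Or.inr h')
        · exact Or.inr h'
theorem phiFvB (x base : ℕ) : ∀ (e : Brs) (b : Bool) (L : List ℕ) (k : VKind) (n : ℕ),
    (k, n) ∈ fvBrs (phiB x base b L e) → (k, n) ∈ fvBrs e ∨ (k = VKind.lam ∧ base ≤ n)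
  | .nil, b, L, k, n => by simp [phiB, fvBrs]
  | .cons c y t bs, b, L, k, n => by
      intro h
      simp only [phiB, fvBrs, Set.mem_union, Set.mem_diff] at h ⊢
      rcases h with h | h
      · rcases phiFvT x base t _ _ k n h.1 with h' | h'
        · exact Or.inl (Or.inl ⟨h', h.2⟩)
        · exact Or.inr h'
      · rcases phiFvB x base bs b L k n h with h' | h'
        · exact Or.inl (Or.inr h')
        · exact Or.inr h'
theorem phiFvS (x base : ℕ) : ∀ (e : Stk) (b : Bool) (L : List ℕ) (k : VKind) (n : ℕ),
    (k, n) ∈ fvStk (phiS x base b L e) → (k, n) ∈ fvStk e ∨ (k = VKind.lam ∧ base ≤ n)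
  | .svar α, b, L, k, n => fun h => Or.inl (by simpa [phiS, fvStk] using h)
  | .push v π, b, L, k, n => by
      intro h
      simp only [phiS, fvStk, Set.mem_union] at h ⊢
      rcases h with h | h
      · rcases phiFvV x base v b L k n h with h' | h'
        · exact Or.inl (Or.inl h')
        · exact Or.inr h'
      · rcases phiFvS x base π b L k n h with h' | h'
        · exact Or.inl (Or.inr h')
        · exact Or.inr h'
  | .frame t π, b, L, k, n => by
      intro h
      simp only [phiS, fvStk, Set.mem_union] at h ⊢
      rcases h with h | h
      · rcases phiFvT x base t b L k n h with h' | h'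
        · exact Or.inl (Or.inl h')
        · exact Or.inr h'
      · rcases phiFvS x base π b L k n h with h' | h'
        · exact Or.inl (Or.inr h')
        · exact Or.inr h'
theorem phiFvP (x base : ℕ) : ∀ (e : Proc) (b : Bool) (L : List ℕ) (k : VKind) (n : ℕ),
    (k, n) ∈ fvPrc (phiP x base b L e) → (k, n) ∈ fvPrc e ∨ (k = VKind.lam ∧ base ≤ n)
  | .mk t π, b, L, k, n => by
      intro h
      simp only [phiP, fvPrc, Set.mem_union] at h ⊢
      rcases h with h | h
      · rcases phiFvT x base t b L k n h with h' | h'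
        · exact Or.inl (Or.inl h')
        · exact Or.inr h'
      · rcases phiFvS x base π b L k n h with h' | h'
        · exact Or.inl (Or.inr h')
        · exact Or.inr h'
end


/-! ### The key substitution decomposition -/

def innerS (x : ℕ) (A : Val) : Bool → Subst
  | true => subst1Lam x A
  | false => Subst.id

theorem innerS_skipLam (x : ℕ) (A : Val) (b : Bool) (y : ℕ) :
    (innerS x A b).skipLam y = innerS x A (if y = x then false else b) := by
  cases b
  · simp [innerS, skipLam_id]
  · by_cases hyx : y = x
    · subst hyx; simp [innerS, skipLam_subst1_self]
    · simp [innerS, hyx, skipLam_subst1 A hyx]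

theorem innerS_skipMu (x : ℕ) (A : Val) (b : Bool) (α : ℕ) :
    (innerS x A b).skipMu α = innerS x A b := by
  cases b
  · simp [innerS, skipMu_id]
  · simp [innerS, skipMu_subst1]

theorem innerS_lamS_nohit (x : ℕ) (A : Val) (b : Bool) (z : ℕ)
    (h : ¬(b = true ∧ z = x)) : (innerS x A b).lamS z = Val.var z := by
  cases b
  · rfl
  · rw [innerS, subst1Lam_lamS, if_neg]
    intro hzx; exact h ⟨rfl, hzx⟩

theorem innerS_muS (x : ℕ) (A : Val) (b : Bool) : (innerS x A b).muS = Stk.svar := by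
  cases b <;> rfl

theorem innerS_trmS (x : ℕ) (A : Val) (b : Bool) : (innerS x A b).trmS = Trm.tvar := by
  cases b <;> rfl

def Theta (σ : Subst) (base : ℕ) (F : ℕ → Val) : Subst :=
  ⟨fun z => if z < base then σ.lamS z else F z, σ.muS, σ.trmS⟩

def decL (m : ℕ) : List ℕ := (Encodable.decode m : Option (List ℕ)).getD []

def thetaA (σ : Subst) (base : ℕ) (A : Val) : Subst :=
  Theta σ base (fun z => substVal (σ.skips (decL (z - base))) A)

theorem thetaA_code (σ : Subst) (base : ℕ) (A : Val) (L : List ℕ) :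
    (thetaA σ base A).lamS (base + Encodable.encode L) = substVal (σ.skips L) A := by
  have h1 : ¬ (base + Encodable.encode L < base) := by omega
  have h2 : base + Encodable.encode L - base = Encodable.encode L := by omega
  simp [thetaA, Theta, h1, h2, decL, Encodable.encodek]

theorem skips_lamS_big {L : List ℕ} {base : ℕ} (σ : Subst) (hL : ∀ n ∈ L, n < 2 * base)
    {z : ℕ} (hz : base ≤ z) : (σ.skips L).lamS z = σ.lamS z := by
  rw [skips_lamS, if_neg]
  intro hmem
  have := hL _ hmem
  omega

section Key
variable (x base : ℕ) (σ : Subst) (A : Val)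

mutual
theorem keyV : ∀ (e : Val) (b : Bool) (L : List ℕ), maxVarV e < base →
    (∀ n ∈ L, n < 2 * base) →
    substVal ((thetaA σ base A).skips L) (phiV x base b L e)
      = substVal (σ.skips L) (substVal (innerS x A b) e)
  | .var z, b, L, hb, hL => by
      unfold phiV
      split
      · next hcase =>
        obtain ⟨hb1, hzx⟩ := hcase
        have hLmem : ¬ (2 * (base + Encodable.encode L) ∈ L) := by
          intro hmem; have := hL _ hmem; omega
        have lhs : substVal ((thetaA σ base A).skips L) (.var (base + Encodable.encode L))
            = substVal (σ.skips L) A := by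
          show ((thetaA σ base A).skips L).lamS _ = _
          rw [skips_lamS, if_neg hLmem, thetaA_code]
        rw [lhs]
        subst hb1
        have : substVal (innerS x A true) (Val.var z) = A := by
          show (innerS x A true).lamS z = A
          rw [innerS, subst1Lam_lamS, if_pos hzx]
        rw [this]
      · next hcase =>
        have hz : z < base := by simpa [maxVarV] using hb
        have rhs : substVal (innerS x A b) (Val.var z) = Val.var z :=
          innerS_lamS_nohit x A b z hcase
        rw [rhs]
        show ((thetaA σ base A).skips L).lamS z = (σ.skips L).lamS z
        rw [skips_lamS, skips_lamS]
        split
        · rfl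
        · show (thetaA σ base A).lamS z = σ.lamS z
          simp [thetaA, Theta, hz]
  | .lam y t, b, L, hb, hL => by
      have hy : y < base := by simp [maxVarV] at hb; omega
      have ht : maxVarT t < base := by simp [maxVarV] at hb; omega
      have hL' : ∀ n ∈ L ++ [2 * y], n < 2 * base := by
        intro n hn
        rcases List.mem_append.mp hn with h | h
        · exact hL n h
        · simp at h; omega
      have e1 : ((thetaA σ base A).skips L).skipLam y = (thetaA σ base A).skips (L ++ [2 * y]) := by
        rw [skips_concat, applySkip_even]
      have e2 : (σ.skips L).skipLam y = σ.skips (L ++ [2 * y]) := by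
        rw [skips_concat, applySkip_even]
      simp only [phiV, substVal]
      rw [e1, innerS_skipLam, e2, keyT t (if y = x then false else b) (L ++ [2 * y]) ht hL']
  | .cns c v, b, L, hb, hL => by
      simp only [phiV, substVal]
      rw [keyV v b L (by simpa [maxVarV] using hb) hL]
  | .rcd fs, b, L, hb, hL => by
      simp only [phiV, substVal]
      rw [keyF fs b L (by simpa [maxVarV] using hb) hL]
theorem keyF : ∀ (e : Flds) (b : Bool) (L : List ℕ), maxVarF e < base →
    (∀ n ∈ L, n < 2 * base) →
    substFlds ((thetaA σ base A).skips L) (phiF x base b L e)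
      = substFlds (σ.skips L) (substFlds (innerS x A b) e)
  | .nil, b, L, _, _ => rfl
  | .cons l v fs, b, L, hb, hL => by
      have h' : maxVarV v < base ∧ maxVarF fs < base := by simp [maxVarF] at hb; omega
      simp only [phiF, substFlds]
      rw [keyV v b L h'.1 hL, keyF fs b L h'.2 hL]
theorem keyT : ∀ (e : Trm) (b : Bool) (L : List ℕ), maxVarT e < base →
    (∀ n ∈ L, n < 2 * base) →
    substTrm ((thetaA σ base A).skips L) (phiT x base b L e)
      = substTrm (σ.skips L) (substTrm (innerS x A b) e)
  | .tvar a, b, L, _, _ => by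
      simp only [phiT, substTrm]
      rw [innerS_trmS]
      show ((thetaA σ base A).skips L).trmS a = substTrm (σ.skips L) (Trm.tvar a)
      rw [skips_trmS]
      show σ.trmS a = (σ.skips L).trmS a
      rw [skips_trmS]
  | .val v, b, L, hb, hL => by
      simp only [phiT, substTrm]
      rw [keyV v b L (by simpa [maxVarT] using hb) hL]
  | .app t u, b, L, hb, hL => by
      have h' : maxVarT t < base ∧ maxVarT u < base := by simp [maxVarT] at hb; omega
      simp only [phiT, substTrm]
      rw [keyT t b L h'.1 hL, keyT u b L h'.2 hL]
  | .mu α t, b, L, hb, hL => by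
      have hα : α < base := by simp [maxVarT] at hb; omega
      have ht : maxVarT t < base := by simp [maxVarT] at hb; omega
      have hL' : ∀ n ∈ L ++ [2 * α + 1], n < 2 * base := by
        intro n hn
        rcases List.mem_append.mp hn with h | h
        · exact hL n h
        · simp at h; omega
      have e1 : ((thetaA σ base A).skips L).skipMu α
          = (thetaA σ base A).skips (L ++ [2 * α + 1]) := by
        rw [skips_concat, applySkip_odd]
      have e2 : (σ.skips L).skipMu α = σ.skips (L ++ [2 * α + 1]) := by
        rw [skips_concat, applySkip_odd]
      simp only [phiT, substTrm]
      rw [e1, innerS_skipMu, e2, keyT t b (L ++ [2 * α + 1]) ht hL']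
  | .prc p, b, L, hb, hL => by
      simp only [phiT, substTrm]
      rw [keyP p b L (by simpa [maxVarT] using hb) hL]
  | .prj v l, b, L, hb, hL => by
      simp only [phiT, substTrm]
      rw [keyV v b L (by simpa [maxVarT] using hb) hL]
  | .cse v bs, b, L, hb, hL => by
      have h' : maxVarV v < base ∧ maxVarB bs < base := by simp [maxVarT] at hb; omega
      simp only [phiT, substTrm]
      rw [keyV v b L h'.1 hL, keyB bs b L h'.2 hL]
  | .dlt v w', b, L, hb, hL => by
      have h' : maxVarV v < base ∧ maxVarV w' < base := by simp [maxVarT] at hb; omega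
      simp only [phiT, substTrm]
      rw [keyV v b L h'.1 hL, keyV w' b L h'.2 hL]
theorem keyB : ∀ (e : Brs) (b : Bool) (L : List ℕ), maxVarB e < base →
    (∀ n ∈ L, n < 2 * base) →
    substBrs ((thetaA σ base A).skips L) (phiB x base b L e)
      = substBrs (σ.skips L) (substBrs (innerS x A b) e)
  | .nil, b, L, _, _ => rfl
  | .cons c y t bs, b, L, hb, hL => by
      have hy : y < base := by simp [maxVarB] at hb; omega
      have ht : maxVarT t < base := by simp [maxVarB] at hb; omega
      have hbs : maxVarB bs < base := by simp [maxVarB] at hb; omega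
      have hL' : ∀ n ∈ L ++ [2 * y], n < 2 * base := by
        intro n hn
        rcases List.mem_append.mp hn with h | h
        · exact hL n h
        · simp at h; omega
      have e1 : ((thetaA σ base A).skips L).skipLam y = (thetaA σ base A).skips (L ++ [2 * y]) := by
        rw [skips_concat, applySkip_even]
      have e2 : (σ.skips L).skipLam y = σ.skips (L ++ [2 * y]) := by
        rw [skips_concat, applySkip_even]
      simp only [phiB, substBrs]
      rw [e1, innerS_skipLam, e2, keyT t (if y = x then false else b) (L ++ [2 * y]) ht hL',
        keyB bs b L hbs hL]
theorem keyS : ∀ (e : Stk) (b : Bool) (L : List ℕ), maxVarS e < base →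
    (∀ n ∈ L, n < 2 * base) →
    substStk ((thetaA σ base A).skips L) (phiS x base b L e)
      = substStk (σ.skips L) (substStk (innerS x A b) e)
  | .svar α, b, L, _, _ => by
      simp only [phiS, substStk]
      rw [innerS_muS]
      show ((thetaA σ base A).skips L).muS α = substStk (σ.skips L) (Stk.svar α)
      show ((thetaA σ base A).skips L).muS α = (σ.skips L).muS α
      rw [skips_muS, skips_muS]
      rfl
  | .push v π, b, L, hb, hL => by
      have h' : maxVarV v < base ∧ maxVarS π < base := by simp [maxVarS] at hb; omega
      simp only [phiS, substStk]
      rw [keyV v b L h'.1 hL, keyS π b L h'.2 hL]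
  | .frame t π, b, L, hb, hL => by
      have h' : maxVarT t < base ∧ maxVarS π < base := by simp [maxVarS] at hb; omega
      simp only [phiS, substStk]
      rw [keyT t b L h'.1 hL, keyS π b L h'.2 hL]
theorem keyP : ∀ (e : Proc) (b : Bool) (L : List ℕ), maxVarP e < base →
    (∀ n ∈ L, n < 2 * base) →
    substPrc ((thetaA σ base A).skips L) (phiP x base b L e)
      = substPrc (σ.skips L) (substPrc (innerS x A b) e)
  | .mk t π, b, L, hb, hL => by
      have h' : maxVarT t < base ∧ maxVarS π < base := by simp [maxVarP] at hb; omega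
      simp only [phiP, substPrc]
      rw [keyT t b L h'.1 hL, keyS π b L h'.2 hL]
end

end Key


/-! ### Machine steps and convergence -/

theorem redI_of_red {j : ℕ} {p q : Proc} (h : Red p q) : RedI j p q := by
  rw [RedI]; exact Or.inl h

theorem uniq_frame {j : ℕ} {u : Val} {t : Trm} {π : Stk} {q : Proc}
    (h : RedI j (.mk (.val u) (.frame t π)) q) : q = .mk t (.push u π) := by
  rw [RedI] at h
  rcases h with h | ⟨v', w', π', hp, _, _⟩
  · cases h; rfl
  · simp at hp

theorem uniq_beta {j : ℕ} {X : ℕ} {t : Trm} {u : Val} {π : Stk} {q : Proc}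
    (h : RedI j (.mk (.val (.lam X t)) (.push u π)) q) :
    q = .mk (substTrm (subst1Lam X u) t) π := by
  rw [RedI] at h
  rcases h with h | ⟨v', w', π', hp, _, _⟩
  · cases h; rfl
  · simp at hp

theorem conv_step {j : ℕ} {p q : Proc} (hstep : RedI j p q)
    (huniq : ∀ q', RedI j p q' → q' = q) (hnf : ¬ Final p) :
    ConvergesIn (RedI j) p ↔ ConvergesIn (RedI j) q := by
  constructor
  · rintro ⟨r, hr, hfin⟩
    rcases Relation.ReflTransGen.cases_head hr with rfl | ⟨c, hc, hcr⟩
    · exact absurd hfin hnf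
    · exact ⟨r, (huniq c hc) ▸ hcr, hfin⟩
  · rintro ⟨r, hr, hfin⟩
    exact ⟨r, Relation.ReflTransGen.head hstep hr, hfin⟩

theorem not_final_frame {u : Val} {t : Trm} {π : Stk} : ¬ Final (.mk (.val u) (.frame t π)) := by
  rintro ⟨v', α, h⟩
  simp at h

theorem not_final_push {v : Val} {u : Val} {π : Stk} : ¬ Final (.mk (.val v) (.push u π)) := by
  rintro ⟨v', α, h⟩
  simp at h

/-- The two-step iff: `u ∗ [λZ.t']π` converges iff `t'[Z:=u] ∗ π` converges. -/
theorem conv_two_steps (j : ℕ) (u : Val) (Z : ℕ) (t' : Trm) (π : Stk) :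
    ConvergesIn (RedI j) (.mk (.val u) (.frame (.val (.lam Z t')) π))
      ↔ ConvergesIn (RedI j) (.mk (substTrm (subst1Lam Z u) t') π) := by
  have s1 : RedI j (.mk (.val u) (.frame (.val (.lam Z t')) π))
      (.mk (.val (.lam Z t')) (.push u π)) := redI_of_red (Red.frame u _ π)
  have s2 : RedI j (.mk (.val (.lam Z t')) (.push u π))
      (.mk (substTrm (subst1Lam Z u) t') π) := redI_of_red (Red.beta Z t' u π)
  exact (conv_step s1 (fun _ h => uniq_frame h) not_final_frame).trans
    (conv_step s2 (fun _ h => uniq_beta h) not_final_push)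

/-- The swap lemma: a single occurrence class can be swapped from `v` to `w`. -/
theorem swap_lemma {v w : Val} (h : Equiv (.val v) (.val w)) (j : ℕ) (Z : ℕ) (σh : Subst)
    (t' : Trm) (π : Stk) :
    ConvergesIn (RedI j) (.mk (substTrm (subst1Lam Z (substVal σh v)) t') π)
      ↔ ConvergesIn (RedI j) (.mk (substTrm (subst1Lam Z (substVal σh w)) t') π) := by
  have h2 := h j j (le_refl j) (.frame (.val (.lam Z t')) π) σh
  have ev : substTrm σh (.val v) = .val (substVal σh v) := rfl
  have ew : substTrm σh (.val w) = .val (substVal σh w) := rfl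
  rw [ev, ew] at h2
  exact (conv_two_steps j (substVal σh v) Z t' π).symm.trans
    (h2.trans (conv_two_steps j (substVal σh w) Z t' π))


/-! ### The chain of swaps -/

def stepSub (σ : Subst) (base : ℕ) (v w : Val) (k : ℕ) : Subst :=
  Theta σ base (fun z =>
    if z < k then substVal (σ.skips (decL (z - base))) w
    else substVal (σ.skips (decL (z - base))) v)

theorem stepSub_lamS (σ : Subst) (base : ℕ) (v w : Val) (k z : ℕ) :
    (stepSub σ base v w k).lamS z =
      if z < base then σ.lamS z
      else if z < k then substVal (σ.skips (decL (z - base))) w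
      else substVal (σ.skips (decL (z - base))) v := rfl

theorem step_swap {v w : Val} (h : Equiv (.val v) (.val w)) (σ : Subst) (base : ℕ)
    (E : Trm) (x : ℕ) (j k : ℕ) (π : Stk)
    (hk : base ≤ k)
    (hbE : maxVarT E < base)
    (hfl : ∀ z, (VKind.lam, z) ∈ fvTrm E → maxVarV (σ.lamS z) < base)
    (hfm : ∀ α, (VKind.mu, α) ∈ fvTrm E → maxVarS (σ.muS α) < base)
    (hft : ∀ a, (VKind.trm, a) ∈ fvTrm E → maxVarT (σ.trmS a) < base)
    (hresv : ∀ L : List ℕ, maxVarV (substVal (σ.skips L) v) < base)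
    (hresw : ∀ L : List ℕ, maxVarV (substVal (σ.skips L) w) < base) :
    ConvergesIn (RedI j) (.mk (substTrm (stepSub σ base v w k) (phiT x base true [] E)) π)
      ↔ ConvergesIn (RedI j)
          (.mk (substTrm (stepSub σ base v w (k + 1)) (phiT x base true [] E)) π) := by
  set ΦE := phiT x base true [] E with hΦE
  set Θ' : Subst :=
    ⟨fun z => if z = k then Val.var k else (stepSub σ base v w k).lamS z, σ.muS, σ.trmS⟩
    with hΘ'
  have hMB : maxBndrT ΦE < k := by
    have h1 : maxBndrT ΦE = maxBndrT E := phiBndrT x base E true []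
    have h2 := bndr_le_varT E
    omega
  have key_eq : ∀ (a : Val), (∀ L : List ℕ, maxVarV (substVal (σ.skips L) a) < base) →
      ∀ (tar : Subst), tar.muS = σ.muS → tar.trmS = σ.trmS →
      tar.lamS k = substVal (σ.skips (decL (k - base))) a →
      (∀ z, z ≠ k → tar.lamS z = (stepSub σ base v w k).lamS z) →
      substTrm (subst1Lam k (substVal (σ.skips (decL (k - base))) a)) (substTrm Θ' ΦE)
        = substTrm tar ΦE := by
    intro a hres tar hmu htrm hk1 hk2
    rw [graftT k _ ΦE Θ' hMB]
    apply extT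
    refine ⟨fun z hz => ?_, fun α hα => ?_, fun a' ha' => ?_⟩
    · show substVal (subst1Lam k _) (Θ'.lamS z) = tar.lamS z
      by_cases hzk : z = k
      · subst hzk
        have e1 : Θ'.lamS z = Val.var z := if_pos rfl
        rw [e1]
        show (subst1Lam z _).lamS z = tar.lamS z
        rw [subst1Lam_lamS, if_pos rfl, hk1]
      · have e1 : Θ'.lamS z = (stepSub σ base v w k).lamS z := if_neg hzk
        rw [e1, hk2 z hzk]
        apply noOccV
        rw [stepSub_lamS]
        by_cases hzb : z < base
        · rw [if_pos hzb]
          rcases phiFvT x base E true [] VKind.lam z hz with hE | ⟨_, hge⟩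
          · have := hfl z hE; omega
          · omega
        · rw [if_neg hzb]
          split
          · exact lt_of_lt_of_le (hresw _) hk
          · exact lt_of_lt_of_le (hresv _) hk
    · show substStk (subst1Lam k _) (Θ'.muS α) = tar.muS α
      have e1 : Θ'.muS α = σ.muS α := rfl
      rw [e1, hmu]
      apply noOccS
      rcases phiFvT x base E true [] VKind.mu α hα with hE | ⟨hbad, _⟩
      · have := hfm α hE; omega
      · exact absurd hbad (by simp)
    · show substTrm (subst1Lam k _) (Θ'.trmS a') = tar.trmS a'
      have e1 : Θ'.trmS a' = σ.trmS a' := rfl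
      rw [e1, htrm]
      apply noOccT
      rcases phiFvT x base E true [] VKind.trm a' ha' with hE | ⟨hbad, _⟩
      · have := hft a' hE; omega
      · exact absurd hbad (by simp)
  have eqv := key_eq v hresv (stepSub σ base v w k) rfl rfl
    (by rw [stepSub_lamS, if_neg (by omega), if_neg (by omega)]) (fun z _ => rfl)
  have eqw := key_eq w hresw (stepSub σ base v w (k + 1)) rfl rfl
    (by rw [stepSub_lamS, if_neg (by omega), if_pos (by omega)])
    (fun z hz => by
      rw [stepSub_lamS, stepSub_lamS]
      by_cases hzb : z < base
      · rw [if_pos hzb, if_pos hzb]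
      · rw [if_neg hzb, if_neg hzb]
        by_cases hzk : z < k
        · rw [if_pos hzk, if_pos (by omega)]
        · rw [if_neg hzk, if_neg (by omega)])
  rw [← eqv, ← eqw]
  exact swap_lemma h j k (σ.skips (decL (k - base))) (substTrm Θ' ΦE) π


/-- Theorem 2 (extensionality for values): if v ≡ w then E[x:=v] ≡ E[x:=w]. -/
theorem ext_val (v w : Val) (E : Trm) (x : ℕ)
    (h : Equiv (.val v) (.val w)) :
    Equiv (substTrm (subst1Lam x v) E) (substTrm (subst1Lam x w) E) := by
  intro i j hj π σ
  clear hj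
  -- choose a fresh base
  obtain ⟨base, hbE, hfl, hfm, hft, hresv, hresw⟩ :
      ∃ base, maxVarT E < base ∧
        (∀ z, (VKind.lam, z) ∈ fvTrm E → maxVarV (σ.lamS z) < base) ∧
        (∀ α, (VKind.mu, α) ∈ fvTrm E → maxVarS (σ.muS α) < base) ∧
        (∀ a, (VKind.trm, a) ∈ fvTrm E → maxVarT (σ.trmS a) < base) ∧
        (∀ L : List ℕ, maxVarV (substVal (σ.skips L) v) < base) ∧
        (∀ L : List ℕ, maxVarV (substVal (σ.skips L) w) < base) := by
    set m0 := max (maxVarT E) (max (maxVarV v) (maxVarV w)) with hm0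
    set N := max m0 ((Finset.range (m0 + 1)).sup fun z =>
      max (maxVarV (σ.lamS z)) (max (maxVarS (σ.muS z)) (maxVarT (σ.trmS z)))) with hN
    have hsup : ∀ z ≤ m0, maxVarV (σ.lamS z) ≤ N ∧ maxVarS (σ.muS z) ≤ N ∧
        maxVarT (σ.trmS z) ≤ N := by
      intro z hz
      have hmem : z ∈ Finset.range (m0 + 1) := Finset.mem_range.mpr (by omega)
      have hle := Finset.le_sup (f := fun z =>
        max (maxVarV (σ.lamS z)) (max (maxVarS (σ.muS z)) (maxVarT (σ.trmS z)))) hmem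
      have hle2 : ((Finset.range (m0 + 1)).sup fun z =>
        max (maxVarV (σ.lamS z)) (max (maxVarS (σ.muS z)) (maxVarT (σ.trmS z)))) ≤ N :=
        le_max_right _ _
      refine ⟨by omega, by omega, by omega⟩
    have hm0N : m0 ≤ N := le_max_left _ _
    have hres : ∀ (a : Val), maxVarV a ≤ m0 → ∀ L : List ℕ,
        maxVarV (substVal (σ.skips L) a) ≤ N := by
      intro a ha L
      have hB : BoundedOn (σ.skips L) (maxVarV a) N := by
        refine ⟨fun z hz => ?_, fun α hα => ?_, fun a' ha' => ?_⟩
        · rw [skips_lamS]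
          split
          · simp [maxVarV]
          · have := (hsup z (by omega)).1; omega
        · rw [skips_muS]
          split
          · simp [maxVarS]
          · have := (hsup α (by omega)).2.1; omega
        · rw [skips_trmS]
          have := (hsup a' (by omega)).2.2; omega
      have := boundV a (σ.skips L) N hB
      omega
    refine ⟨N + 1, by omega, fun z hz => ?_, fun α hα => ?_, fun a ha => ?_,
      fun L => ?_, fun L => ?_⟩
    · have h1 := fv_le_varT E VKind.lam z hz
      have := (hsup z (by omega)).1; omega
    · have h1 := fv_le_varT E VKind.mu α hα
      have := (hsup α (by omega)).2.1; omega
    · have h1 := fv_le_varT E VKind.trm a ha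
      have := (hsup a (by omega)).2.2; omega
    · have := hres v (by omega) L; omega
    · have := hres w (by omega) L; omega
  -- key decompositions
  have hkv := keyT x base σ v E true [] hbE (by simp)
  have hkw := keyT x base σ w E true [] hbE (by simp)
  rw [skips_nil, skips_nil, show innerS x v true = subst1Lam x v from rfl] at hkv
  rw [skips_nil, skips_nil, show innerS x w true = subst1Lam x w from rfl] at hkw
  set ΦE := phiT x base true [] E with hΦE
  -- start of the chain
  have hstart : thetaA σ base v = stepSub σ base v w base := by
    refine Subst.ext' ?_ rfl rfl
    funext z
    rw [stepSub_lamS]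
    by_cases hzb : z < base
    · simp [thetaA, Theta, hzb]
    · simp [thetaA, Theta, hzb]
  -- the chain of swaps
  have hchain : ∀ d : ℕ,
      ConvergesIn (RedI j) (.mk (substTrm (stepSub σ base v w base) ΦE) π) ↔
      ConvergesIn (RedI j) (.mk (substTrm (stepSub σ base v w (base + d)) ΦE) π) := by
    intro d
    induction d with
    | zero => rfl
    | succ d ih =>
      exact ih.trans
        (step_swap h σ base E x j (base + d) π (by omega) hbE hfl hfm hft hresv hresw)
  -- end of the chain
  set M := maxVarT ΦE with hM
  have hend : substTrm (stepSub σ base v w (base + (M + 1 - base))) ΦE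
      = substTrm (thetaA σ base w) ΦE := by
    apply extT
    refine ⟨fun z hz => ?_, fun α _ => rfl, fun a _ => rfl⟩
    have hzM : z ≤ M := fv_le_varT ΦE VKind.lam z hz
    rw [stepSub_lamS]
    by_cases hzb : z < base
    · simp [thetaA, Theta, hzb]
    · rw [if_neg hzb, if_pos (by omega)]
      simp [thetaA, Theta, hzb]
  rw [← hkv, ← hkw, hstart, ← hend]
  exact hchain (M + 1 - base)

end CBV
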